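/- For a ≥ 1 and χ ≥ 2, the Turán graph T_{aχ,χ} is an a(χ−1)-regular graph with chromatic number χ, and every a(χ−1)-regular graph with chromatic number χ has at least aχ vertices; hence T_{aχ,χ} is an extremal (a(χ−1)|χ)-graph. -/

import Mathlib

lemma count_mod (a χ k : ℕ) (hk : k < χ) :
    (Finset.univ.filter (fun w : Fin (a*χ) => w.val % χ = k)).card = a := by
  have hχ : 0 < χ := hk.trans_le' (Nat.zero_le k)
  have h : (Finset.univ.filter (fun w : Fin (a*χ) => w.val % χ = k)).card
      = (Finset.univ : Finset (Fin a)).card := by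
    refine Finset.card_bij' (fun w _ => (⟨w.val / χ, (Nat.div_lt_iff_lt_mul hχ).2 ?_⟩ : Fin a))
      (fun i _ => (⟨i.val * χ + k, ?_⟩ : Fin (a*χ))) (fun _ _ => Finset.mem_univ _) ?_ ?_ ?_
    · exact w.2
    · have h1 : i.val + 1 ≤ a := i.2
      calc i.val * χ + k < i.val * χ + χ := by omega
        _ = (i.val + 1) * χ := by ring
        _ ≤ a * χ := Nat.mul_le_mul_right χ h1
    · intro i _
      simp [Nat.mul_add_mod' i.val χ k, Nat.mod_eq_of_lt hk]
    · intro w hw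
      simp only [Finset.mem_filter] at hw
      ext
      simp only []
      conv_rhs => rw [← Nat.div_add_mod w.val χ]
      rw [hw.2, Nat.mul_comm]
    · intro i _
      ext
      show (i.val * χ + k) / χ = i.val
      rw [Nat.add_comm, Nat.add_mul_div_right _ _ hχ, Nat.div_eq_of_lt hk, Nat.zero_add]
  simpa using h

lemma turan_adj (n r : ℕ) (v w : Fin n) :
    (SimpleGraph.turanGraph n r).Adj v w ↔ v.val % r ≠ w.val % r := by
  constructor <;> intro h <;> simpa [SimpleGraph.turanGraph] using h

/-- For `a ≥ 1` and `χ ≥ 2`, the Turán graph `T_{aχ,χ}` is an `a(χ−1)`-regular graph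
with chromatic number `χ`, and every `a(χ−1)`-regular graph with chromatic number `χ`
has at least `aχ` vertices; hence `T_{aχ,χ}` is an extremal `(a(χ−1)|χ)`-graph. -/
theorem turanGraph_extremal (a χ : ℕ) (ha : 1 ≤ a) (hχ : 2 ≤ χ) :
    (SimpleGraph.turanGraph (a * χ) χ).IsRegularOfDegree (a * (χ - 1)) ∧
    (SimpleGraph.turanGraph (a * χ) χ).chromaticNumber = χ ∧
    ∀ (n : ℕ) (G : SimpleGraph (Fin n)),
      (∀ v, (G.neighborSet v).ncard = a * (χ - 1)) → G.chromaticNumber = χ →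
        a * χ ≤ n := by
  have hχ0 : 0 < χ := by omega
  refine ⟨?_, ?_, ?_⟩
  · -- regularity
    intro v
    rw [SimpleGraph.degree]
    have hN : (SimpleGraph.turanGraph (a * χ) χ).neighborFinset v
        = Finset.univ.filter (fun w : Fin (a*χ) => ¬ (w.val % χ = v.val % χ)) := by
      ext w
      simp [SimpleGraph.mem_neighborFinset, turan_adj, ne_comm]
    rw [hN, Finset.filter_not, Finset.card_sdiff_of_subset (Finset.filter_subset _ _),
      count_mod a χ (v.val % χ) (Nat.mod_lt _ hχ0), Finset.card_univ, Fintype.card_fin]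
    have hx : χ - 1 + 1 = χ := by omega
    have : a * χ = a * (χ - 1) + a := by
      conv_lhs => rw [← hx]
      ring
    omega
  · -- chromatic number
    have hcol : (SimpleGraph.turanGraph (a * χ) χ).Colorable χ := by
      refine ⟨⟨fun w => (⟨w.val % χ, Nat.mod_lt _ hχ0⟩ : Fin χ), ?_⟩⟩
      intro v w hvw
      rw [turan_adj] at hvw
      simp only [SimpleGraph.top_adj, ne_eq]
      intro h
      exact hvw (congrArg Fin.val h)
    refine le_antisymm hcol.chromaticNumber_le ?_
    -- clique of size χ
    have hclique : (SimpleGraph.turanGraph (a * χ) χ).IsClique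
        ((Finset.range χ).image (fun k => (⟨k % (a*χ), Nat.mod_lt _ (by positivity)⟩ : Fin (a*χ)))) := by
      intro x hx y hy hxy
      simp only [Finset.coe_image, Set.mem_image, Finset.coe_range, Set.mem_Iio] at hx hy
      obtain ⟨i, hi, rfl⟩ := hx
      obtain ⟨j, hj, rfl⟩ := hy
      have hiaχ : i < a * χ := lt_of_lt_of_le hi (Nat.le_mul_of_pos_left χ ha)
      have hjaχ : j < a * χ := lt_of_lt_of_le hj (Nat.le_mul_of_pos_left χ ha)
      rw [turan_adj]
      simp only [Nat.mod_eq_of_lt hiaχ, Nat.mod_eq_of_lt hjaχ, Nat.mod_eq_of_lt hi,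
        Nat.mod_eq_of_lt hj]
      intro h
      exact hxy (by simp [h])
    have hcard : ((Finset.range χ).image
        (fun k => (⟨k % (a*χ), Nat.mod_lt _ (by positivity : 0 < a*χ)⟩ : Fin (a*χ)))).card = χ := by
      rw [Finset.card_image_of_injOn ?_, Finset.card_range]
      intro i hi j hj hij
      simp only [Finset.coe_range, Set.mem_Iio] at hi hj
      have h1 : i % (a*χ) = j % (a*χ) := congrArg Fin.val hij
      have hle : χ ≤ a * χ := Nat.le_mul_of_pos_left χ ha
      rwa [Nat.mod_eq_of_lt (hi.trans_le hle), Nat.mod_eq_of_lt (hj.trans_le hle)] at h1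
    have := hclique.card_le_chromaticNumber
    rw [hcard] at this
    exact this
  · -- minimality
    intro n G hreg hchrom
    letI : DecidableRel G.Adj := Classical.decRel _
    have hn0 : 0 < n := by
      by_contra h
      have hzero : n = 0 := by omega
      subst hzero
      rw [SimpleGraph.chromaticNumber_eq_zero_of_isEmpty] at hchrom
      have : χ = 0 := by exact_mod_cast hchrom.symm
      omega
    have hcol : G.Colorable χ := by
      rw [← SimpleGraph.chromaticNumber_le_iff_colorable, hchrom]
    obtain ⟨C⟩ := hcol
    -- neighborFinset cards
    have hreg' : ∀ v, (G.neighborFinset v).card = a * (χ - 1) := by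
      intro v
      rw [← hreg v, SimpleGraph.neighborFinset_def, Set.ncard_eq_toFinset_card']
    have hdeg_le : a * (χ - 1) ≤ n := by
      obtain ⟨v⟩ : Nonempty (Fin n) := ⟨⟨0, hn0⟩⟩
      calc a * (χ - 1) = (G.neighborFinset v).card := (hreg' v).symm
        _ ≤ Finset.univ.card := Finset.card_le_card (Finset.subset_univ _)
        _ = n := by simp
    -- each color class has size ≤ n - a*(χ-1)
    have hfiber : ∀ c : Fin χ, (Finset.univ.filter (fun v => C v = c)).card ≤ n - a * (χ - 1) := by
      intro c
      rcases Finset.eq_empty_or_nonempty (Finset.univ.filter (fun v => C v = c)) with h | ⟨v, hv⟩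
      · simp [h]
      · simp only [Finset.mem_filter] at hv
        have hdisj : Disjoint (Finset.univ.filter (fun w => C w = c)) (G.neighborFinset v) := by
          rw [Finset.disjoint_left]
          intro w hw hw'
          simp only [Finset.mem_filter] at hw
          rw [SimpleGraph.mem_neighborFinset] at hw'
          exact C.valid hw'.symm (by rw [hw.2, hv.2])
        have := Finset.card_le_card (Finset.subset_univ
          ((Finset.univ.filter (fun w => C w = c)) ∪ G.neighborFinset v))
        rw [Finset.card_union_of_disjoint hdisj, hreg' v] at this
        simp only [Finset.card_univ, Fintype.card_fin] at this
        omega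
    have hsum : n ≤ χ * (n - a * (χ - 1)) := by
      have h1 : (Finset.univ : Finset (Fin n)).card
          = ∑ c : Fin χ, (Finset.univ.filter (fun v => C v = c)).card :=
        Finset.card_eq_sum_card_fiberwise (fun v _ => Finset.mem_univ (C v))
      calc n = (Finset.univ : Finset (Fin n)).card := by simp
        _ = ∑ c : Fin χ, (Finset.univ.filter (fun v => C v = c)).card := h1
        _ ≤ ∑ _c : Fin χ, (n - a * (χ - 1)) := Finset.sum_le_sum (fun c _ => hfiber c)
        _ = χ * (n - a * (χ - 1)) := by simp [Finset.sum_const, Nat.mul_comm]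
    -- arithmetic
    set m := n - a * (χ - 1) with hm
    have hn : n = a * (χ - 1) + m := by omega
    have h2 : a * (χ - 1) + m ≤ χ * m := by omega
    have hx : χ - 1 + 1 = χ := by omega
    have h3 : χ * m = (χ - 1) * m + m := by
      conv_lhs => rw [← hx]
      ring
    have h4 : a * (χ - 1) ≤ (χ - 1) * m := by omega
    have h4' : (χ - 1) * a ≤ (χ - 1) * m := by rw [Nat.mul_comm (χ-1) a]; exact h4
    have h5 : a ≤ m := Nat.le_of_mul_le_mul_left h4' (by omega : 0 < χ - 1)
    calc a * χ = a * (χ - 1) + a := by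
          conv_lhs => rw [← hx]
          ring
      _ ≤ a * (χ - 1) + m := by omega
      _ = n := hn.symm
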